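/- For every finite simple graph G, the star chromatic number satisfies χ_s(G) ≤ wcol_2(G): coloring greedily so that each vertex v gets a color different from all vertices in W_2[G,σ,v] \ {v} yields a proper coloring with no bicolored path on four vertices. -/

import Mathlib

open SimpleGraph

/-- `y` is weakly `r`-reachable from `x` w.r.t. the ordering `le`:
`y ≤ x` and there is an `x,y`-path of length at most `r` all of whose
vertices `z` satisfy `y ≤ z`. -/
def wreach {V : Type*} (G : SimpleGraph V) (le : V → V → Prop) (r : ℕ) (x : V) : Set V :=
  {y | le y x ∧ ∃ p : G.Walk x y, p.IsPath ∧ p.length ≤ r ∧ ∀ z ∈ p.support, le y z}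

/-- `y` is strongly `r`-reachable from `x` w.r.t. the ordering `le`:
`y ≤ x` and there is an `x,y`-path of length at most `r` all of whose
vertices `z ≠ y` satisfy `x ≤ z`. -/
def sreach {V : Type*} (G : SimpleGraph V) (le : V → V → Prop) (r : ℕ) (x : V) : Set V :=
  {y | le y x ∧ ∃ p : G.Walk x y, p.IsPath ∧ p.length ≤ r ∧ ∀ z ∈ p.support, z ≠ y → le x z}

/-- `wcol_r(G, σ)`. -/
noncomputable def wcolOn {V : Type*} [Fintype V] (G : SimpleGraph V)
    (le : V → V → Prop) (r : ℕ) : ℕ :=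
  Finset.univ.sup fun x => Nat.card (wreach G le r x)

/-- `scol_r(G, σ)`. -/
noncomputable def scolOn {V : Type*} [Fintype V] (G : SimpleGraph V)
    (le : V → V → Prop) (r : ℕ) : ℕ :=
  Finset.univ.sup fun x => Nat.card (sreach G le r x)

/-- The weak `r`-coloring number. -/
noncomputable def wcol {V : Type*} [Fintype V] (G : SimpleGraph V) (r : ℕ) : ℕ :=
  ⨅ σ : LinearOrder V, wcolOn G σ.le r

/-- The strong `r`-coloring number. -/
noncomputable def scol {V : Type*} [Fintype V] (G : SimpleGraph V) (r : ℕ) : ℕ :=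
  ⨅ σ : LinearOrder V, scolOn G σ.le r

/-- `col(G, σ)`: one more than the max back-degree. -/
noncomputable def colOn {V : Type*} [Fintype V] (G : SimpleGraph V)
    (lt : V → V → Prop) : ℕ :=
  Finset.univ.sup fun x => 1 + Nat.card {y | G.Adj x y ∧ lt y x}

/-- The coloring number `col(G)`. -/
noncomputable def col {V : Type*} [Fintype V] (G : SimpleGraph V) : ℕ :=
  ⨅ σ : LinearOrder V, colOn G σ.lt


set_option linter.unusedSectionVars false
section Aux
variable {V : Type*} [Fintype V] [LinearOrder V] (G : SimpleGraph V)

lemma mem_wreach_self (v : V) : v ∈ wreach G (· ≤ ·) 2 v :=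
  ⟨le_refl v, Walk.nil, by simp, by simp, by simp⟩

lemma adj_mem_wreach {u v : V} (h : u ≤ v) (hadj : G.Adj v u) :
    u ∈ wreach G (· ≤ ·) 2 v := by
  refine ⟨h, Walk.cons hadj Walk.nil, ?_, by simp, ?_⟩
  · simp [Walk.cons_isPath_iff, hadj.ne]
  · intro z hz
    simp only [Walk.support_cons, Walk.support_nil, List.mem_cons, List.mem_singleton] at hz
    rcases hz with rfl | rfl | h'
    · exact h
    · exact le_refl _
    · simp at h'

lemma path2_mem_wreach {u v w : V} (h1 : u ≤ v) (h2 : u ≤ w) (hvw : G.Adj v w)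
    (hwu : G.Adj w u) (hvu : v ≠ u) : u ∈ wreach G (· ≤ ·) 2 v := by
  refine ⟨h1, Walk.cons hvw (Walk.cons hwu Walk.nil), ?_, by simp, ?_⟩
  · simp [Walk.cons_isPath_iff, hwu.ne, hvw.ne, hvu]
  · intro z hz
    simp only [Walk.support_cons, Walk.support_nil, List.mem_cons, List.mem_singleton] at hz
    rcases hz with rfl | rfl | rfl | h'
    · exact h1
    · exact h2
    · exact le_refl _
    · simp at h'

lemma exists_good {N : ℕ} {S : Set V} {v : V} (hN : S.ncard < N)
    (hS : ∀ u ∈ S, u < v) (rec : ∀ u, u < v → Fin N) :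
    ∃ c : Fin N, ∀ u, (hu : u ∈ S) → rec u (hS u hu) ≠ c := by
  by_contra h
  push_neg at h
  have hsub : (Set.univ : Set (Fin N)) ⊆ Set.range (fun u : S => rec u.1 (hS u.1 u.2)) := by
    intro c _
    obtain ⟨u, hu, he⟩ := h c
    exact ⟨⟨u, hu⟩, he⟩
  have h1 : N ≤ (Set.range (fun u : S => rec u.1 (hS u.1 u.2))).ncard := by
    calc N = (Set.univ : Set (Fin N)).ncard := by simp [Set.ncard_univ]
    _ ≤ _ := Set.ncard_le_ncard hsub (Set.toFinite _)
  have h2 : Nat.card (Set.range (fun u : S => rec u.1 (hS u.1 u.2))) ≤ Nat.card S :=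
    Finite.card_range_le _
  rw [Nat.card_coe_set_eq, Nat.card_coe_set_eq] at h2
  omega

noncomputable def greedy (N : ℕ)
    (hN : ∀ v : V, ((wreach G (· ≤ ·) 2 v) \ {v}).ncard < N) : V → Fin N :=
  (Finite.to_wellFoundedLT).wf.fix fun v rec =>
    Classical.choose (exists_good (hN v)
      (fun u hu => lt_of_le_of_ne hu.1.1 (by simpa using hu.2)) rec)

lemma greedy_spec (N : ℕ)
    (hN : ∀ v : V, ((wreach G (· ≤ ·) 2 v) \ {v}).ncard < N)
    {u v : V} (hu : u ∈ wreach G (· ≤ ·) 2 v) (hne : u ≠ v) :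
    greedy G N hN u ≠ greedy G N hN v := by
  have heq := (Finite.to_wellFoundedLT).wf.fix_eq (C := fun _ => Fin N)
    (fun v rec => Classical.choose (exists_good (hN v)
      (fun u hu => lt_of_le_of_ne hu.1.1 (by simpa using hu.2)) rec)) v
  have hspec := Classical.choose_spec (exists_good (hN v)
      (fun u (hu : u ∈ (wreach G (· ≤ ·) 2 v) \ {v}) =>
        lt_of_le_of_ne hu.1.1 (by simpa using hu.2))
      (fun y _ => greedy G N hN y))
  have := hspec u ⟨hu, by simpa using hne⟩
  rw [greedy, heq]
  exact this

end Aux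

/-- the star chromatic number is at most `wcol_2(G)`:
there is a proper coloring with `wcol_2(G)` colors in which no path on
four vertices receives only two colors. -/
theorem star_chromatic_le_wcol_two {V : Type*} [Fintype V] (G : SimpleGraph V) :
    ∃ C : V → Fin (wcol G 2),
      (∀ u v, G.Adj u v → C u ≠ C v) ∧
      ∀ (u v : V) (p : G.Walk u v), p.IsPath → p.length = 3 →
        ¬ ∃ c₁ c₂ : Fin (wcol G 2), ∀ z ∈ p.support, C z = c₁ ∨ C z = c₂ := by
  cases isEmpty_or_nonempty V with
  | inl h => exact ⟨fun v => isEmptyElim v, fun u => isEmptyElim u, fun u => isEmptyElim u⟩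
  | inr h =>
    have hne : Nonempty (LinearOrder V) :=
      ⟨LinearOrder.lift' (Fintype.equivFin V) (Fintype.equivFin V).injective⟩
    have hmem : wcol G 2 ∈ Set.range (fun σ : LinearOrder V => wcolOn G σ.le 2) := by
      rw [wcol, iInf]
      exact Nat.sInf_mem (Set.range_nonempty _)
    obtain ⟨σ, hσ⟩ := hmem
    letI := σ
    have hσ' : wcolOn G σ.le 2 = wcol G 2 := hσ
    have hcard : ∀ v : V, (wreach G (· ≤ ·) 2 v).ncard ≤ wcol G 2 := by
      intro v
      have h1 : Nat.card (wreach G σ.le 2 v) ≤ wcolOn G σ.le 2 :=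
        Finset.le_sup (f := fun x => Nat.card (wreach G σ.le 2 x)) (Finset.mem_univ v)
      rw [Nat.card_coe_set_eq] at h1
      rw [← hσ']
      exact h1
    have hN : ∀ v : V, ((wreach G (· ≤ ·) 2 v) \ {v}).ncard < wcol G 2 := by
      intro v
      exact lt_of_lt_of_le
        (Set.ncard_diff_singleton_lt_of_mem (mem_wreach_self G v) (Set.toFinite _)) (hcard v)
    set C := greedy G (wcol G 2) hN with hC
    have proper : ∀ u v, G.Adj u v → C u ≠ C v := by
      intro u v huv
      rcases le_total u v with hle | hle
      · exact greedy_spec G _ hN (adj_mem_wreach G hle huv.symm) huv.ne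
      · exact fun he => greedy_spec G _ hN (adj_mem_wreach G hle huv) huv.ne' he.symm
    refine ⟨C, proper, ?_⟩
    rintro a v p hp hlen ⟨c1, c2, hc⟩
    cases p with
    | nil => simp at hlen
    | cons h1 q =>
      rename_i b
      cases q with
      | nil => simp at hlen
      | cons h2 q =>
        rename_i c
        cases q with
        | nil => simp at hlen
        | cons h3 q =>
          cases q with
          | cons h4 q => simp [Walk.length_cons] at hlen
          | nil =>
            have hnodup := hp.support_nodup
            simp only [Walk.support_cons, Walk.support_nil, List.nodup_cons, List.mem_cons,
              List.mem_singleton, List.not_mem_nil, not_or, List.nodup_nil, and_true] at hnodup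
            have hac : a ≠ c := by tauto
            have hbv : b ≠ v := by tauto
            have hca := hc a (by simp)
            have hcb := hc b (by simp)
            have hcc := hc c (by simp)
            have hcv' := hc v (by simp)
            have pab := proper _ _ h1
            have pbc := proper _ _ h2
            have pcv := proper _ _ h3
            have hA : C a = C c := by
              rcases hca with h' | h' <;> rcases hcc with h'' | h'' <;>
                rcases hcb with h3' | h3' <;> clear proper <;> simp_all
            have hB : C b = C v := by
              rcases hcb with h' | h' <;> rcases hcv' with h'' | h'' <;>
                rcases hcc with h3' | h3' <;> clear proper <;> simp_all
            rcases le_total b c with hbc2 | hcb2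
            · rcases le_total b v with hbv2 | hvb2
              · exact greedy_spec G _ hN
                  (path2_mem_wreach G hbv2 hbc2 h3.symm h2.symm (Ne.symm hbv)) hbv hB
              · exact greedy_spec G _ hN
                  (path2_mem_wreach G hvb2 (le_trans hvb2 hbc2) h2 h3 hbv) (Ne.symm hbv) hB.symm
            · rcases le_total a c with hac2 | hca2
              · exact greedy_spec G _ hN
                  (path2_mem_wreach G hac2 (le_trans hac2 hcb2) h2.symm h1.symm (Ne.symm hac))
                  hac hA
              · exact greedy_spec G _ hN
                  (path2_mem_wreach G hca2 hcb2 h1 h2 hac) (Ne.symm hac) hA.symm
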